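/- arXiv:2201.12277 — 2 statements merged into one kernel-verified Lean document; each statement's English description precedes it below -/
import Mathlib

section
/- Monotonicity of the one-step Bellman update in AoI: if V : {0,…,N} × {0,…,B} × {1,…,Δmax} → ℝ is non-decreasing in its third (AoI) argument, then the updated function V'(r,b,Δ) = min over a ∈ {0,1} of [r·Δ'(b,Δ,a) + μ·a + ∑_{r',l} P(r')·q(l)·V(r', b'(b,a,l), Δ'(b,Δ,a))] is also non-decreasing in Δ, where Δ'(b,Δ,a) = 1 if (a = 1 and b ≥ 1) and min(Δ+1, Δmax) otherwise, b'(b,a,l) = min(b + l − a·1_{b≥1}, B), q(1) = λ, q(0) = 1 − λ with λ ∈ [0,1], μ ≥ 0, and P is any probability mass function on {0,…,N}. -/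
open Finset

/-- Next AoI: 1 if command and battery nonempty, else min(Δ+1, Δmax). -/
def nextAoI (Δmax b Δ a : ℕ) : ℕ :=
  if a = 1 ∧ 1 ≤ b then 1 else min (Δ + 1) Δmax

/-- Next battery: min(b + l − a·1_{b≥1}, B). -/
def nextBat (B b a l : ℕ) : ℕ :=
  min (b + l - (if a = 1 ∧ 1 ≤ b then 1 else 0)) B

/-- Harvesting pmf: q(1) = λ, q(0) = 1 − λ. -/
def harvProb (lam : ℝ) (l : ℕ) : ℝ := if l = 1 then lam else 1 - lam

/-- State-action value in the per-sensor Bellman update. -/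
noncomputable def bellmanQ (N B Δmax : ℕ) (lam μ : ℝ) (P : ℕ → ℝ)
    (V : ℕ → ℕ → ℕ → ℝ) (r b Δ a : ℕ) : ℝ :=
  (r : ℝ) * (nextAoI Δmax b Δ a : ℝ) + μ * (a : ℝ) +
    ∑ r' ∈ range (N + 1), ∑ l ∈ range 2,
      P r' * harvProb lam l * V r' (nextBat B b a l) (nextAoI Δmax b Δ a)

/-- Bellman-updated value function. -/
noncomputable def bellmanUpdate (N B Δmax : ℕ) (lam μ : ℝ) (P : ℕ → ℝ)
    (V : ℕ → ℕ → ℕ → ℝ) (r b Δ : ℕ) : ℝ :=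
  min (bellmanQ N B Δmax lam μ P V r b Δ 0) (bellmanQ N B Δmax lam μ P V r b Δ 1)

/-- Monotonicity of the one-step Bellman update in the AoI. -/
theorem bellmanUpdate_mono_aoi (N B Δmax : ℕ) (hN : 1 ≤ N) (hB : 1 ≤ B)
    (hΔmax : 1 ≤ Δmax) (lam μ : ℝ) (hlam0 : 0 ≤ lam) (hlam1 : lam ≤ 1)
    (hμ : 0 ≤ μ) (P : ℕ → ℝ) (hP0 : ∀ r', 0 ≤ P r')
    (hP1 : ∀ r', P r' ≤ 1) (hPsum : ∑ r' ∈ range (N + 1), P r' = 1)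
    (V : ℕ → ℕ → ℕ → ℝ)
    (hV : ∀ r b Δ Δ', Δ ≤ Δ' → V r b Δ ≤ V r b Δ')
    (r b Δ Δ' : ℕ) (h : Δ ≤ Δ') :
    bellmanUpdate N B Δmax lam μ P V r b Δ ≤
      bellmanUpdate N B Δmax lam μ P V r b Δ' := by
  have haoi : ∀ a, nextAoI Δmax b Δ a ≤ nextAoI Δmax b Δ' a := by
    intro a
    unfold nextAoI
    split <;> simp [min_le_min, h]
  have hq : ∀ a, bellmanQ N B Δmax lam μ P V r b Δ a ≤
      bellmanQ N B Δmax lam μ P V r b Δ' a := by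
    intro a
    unfold bellmanQ
    gcongr with r' _ l hl
    · exact Nat.cast_le.2 (haoi a)
    · refine mul_nonneg (hP0 r') ?_
      unfold harvProb; split <;> linarith
    · exact hV _ _ _ _ (haoi a)
  exact min_le_min (hq 0) (hq 1)
end

section
/- Threshold structure in AoI: under the same Bellman setup, if V is non-decreasing in the AoI argument and the action a = 1 is optimal in state (r, b, Δ) (i.e., Q(s,1) ≤ Q(s,0)), then a = 1 is also optimal in state (r, b, Δ̄) for every Δ̄ ≥ Δ, where Q(s,a) = r·Δ'(b,Δ,a) + μ·a + ∑_{r',l} P(r')·q(l)·V(r', b'(b,a,l), Δ'(b,Δ,a)). -/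
open Finset

/-- Threshold structure in AoI: if commanding is optimal at AoI Δ, it remains
optimal at every larger AoI Δ' ≤ Δmax. -/
theorem bellman_threshold_aoi (N B Δmax : ℕ) (hN : 1 ≤ N) (hB : 1 ≤ B)
    (hΔmax : 1 ≤ Δmax) (lam μ : ℝ) (hlam0 : 0 ≤ lam) (hlam1 : lam ≤ 1)
    (hμ : 0 ≤ μ) (P : ℕ → ℝ) (hP0 : ∀ r', 0 ≤ P r')
    (hP1 : ∀ r', P r' ≤ 1) (hPsum : ∑ r' ∈ range (N + 1), P r' = 1)
    (V : ℕ → ℕ → ℕ → ℝ)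
    (hV : ∀ r b Δ Δ', Δ ≤ Δ' → V r b Δ ≤ V r b Δ')
    (r b Δ Δ' : ℕ) (h : Δ ≤ Δ') (hm : Δ' ≤ Δmax)
    (hopt : bellmanQ N B Δmax lam μ P V r b Δ 1 ≤
      bellmanQ N B Δmax lam μ P V r b Δ 0) :
    bellmanQ N B Δmax lam μ P V r b Δ' 1 ≤
      bellmanQ N B Δmax lam μ P V r b Δ' 0 := by
  have hq : ∀ l, 0 ≤ harvProb lam l := by
    intro l; unfold harvProb; split <;> linarith
  have hmin : min (Δ + 1) Δmax ≤ min (Δ' + 1) Δmax := by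
    exact min_le_min (by omega) le_rfl
  by_cases hb : 1 ≤ b
  · have h1 : bellmanQ N B Δmax lam μ P V r b Δ' 1
        = bellmanQ N B Δmax lam μ P V r b Δ 1 := by
      simp [bellmanQ, nextAoI, nextBat, hb]
    have h0 : bellmanQ N B Δmax lam μ P V r b Δ 0
        ≤ bellmanQ N B Δmax lam μ P V r b Δ' 0 := by
      unfold bellmanQ nextAoI nextBat
      simp only [show ¬((0:ℕ) = 1 ∧ 1 ≤ b) from by simp, if_neg]
      gcongr with r' _ l _
      · exact Nat.cast_le.mpr hmin
      · exact mul_nonneg (hP0 r') (hq l)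
      · exact hV _ _ _ _ hmin
    linarith
  · have key : ∀ D, bellmanQ N B Δmax lam μ P V r b D 1
        = bellmanQ N B Δmax lam μ P V r b D 0 + μ := by
      intro D
      simp [bellmanQ, nextAoI, nextBat, hb]
      ring
    have h0 : bellmanQ N B Δmax lam μ P V r b Δ 0
        ≤ bellmanQ N B Δmax lam μ P V r b Δ' 0 := by
      unfold bellmanQ nextAoI nextBat
      simp only [show ¬((0:ℕ) = 1 ∧ 1 ≤ b) from by simp, if_neg]
      gcongr with r' _ l _
      · exact Nat.cast_le.mpr hmin
      · exact mul_nonneg (hP0 r') (hq l)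
      · exact hV _ _ _ _ hmin
    have := key Δ
    have := key Δ'
    linarith
end
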